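/- Assume X is nonempty. Then for every element s of the iterated composition Y_m and every i ∈ {1, …, m}, there is exactly one block s_i ∈ X_i such that π_{I_i}(s) ⊆ s_i. (This makes the decomposition map d_i : Y_m → X_i well defined for each subsystem i.) -/

import Mathlib

/-- Projection of a state `x : Fin d → ℝ` onto the index set `I`. -/
def proj {d : ℕ} (I : Set (Fin d)) (x : Fin d → ℝ) : ↥I → ℝ := fun l => x l.1

/-- Elementwise projection of a set of states onto the index set `I`. -/
def projSet {d : ℕ} (I : Set (Fin d)) (S : Set (Fin d → ℝ)) : Set (↥I → ℝ) :=
  proj I '' S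

/-- Restriction of a partial state defined on `K` to a subset `I ⊆ K`. -/
def res {d : ℕ} {I K : Set (Fin d)} (h : I ⊆ K) (f : ↥K → ℝ) : ↥I → ℝ :=
  fun l => f ⟨l.1, h l.2⟩

/-- Elementwise restriction of a set of partial states on `K` to `I ⊆ K`. -/
def resSet {d : ℕ} {I K : Set (Fin d)} (h : I ⊆ K) (S : Set (↥K → ℝ)) : Set (↥I → ℝ) :=
  res h '' S

/-- `𝒮` is a partition of `A`: nonempty, pairwise disjoint sets whose union is `A`. -/
def IsPartition {α : Type*} (𝒮 : Set (Set α)) (A : Set α) : Prop :=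
  (∀ s ∈ 𝒮, s.Nonempty) ∧ (𝒮.Pairwise fun s t => Disjoint s t) ∧ ⋃₀ 𝒮 = A

/-- The preliminary composition `C₀(Xi, Xj)`. -/
def C0 {n : ℕ} (X : Set (Fin n → ℝ)) (Ii Ij : Set (Fin n))
    (Xi : Set (Set (↥Ii → ℝ))) (Xj : Set (Set (↥Ij → ℝ))) :
    Set (Set (↥(Ii ∪ Ij) → ℝ)) :=
  { s | s ⊆ projSet (Ii ∪ Ij) X ∧
        (∃ t ∈ Xi, resSet Set.subset_union_left s ⊆ t) ∧
        (∃ t' ∈ Xj, resSet Set.subset_union_right s ⊆ t') }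

/-- The composition `Xi ⋒ Xj`: the maximal elements of `C₀(Xi, Xj)`. -/
def Comp {n : ℕ} (X : Set (Fin n → ℝ)) (Ii Ij : Set (Fin n))
    (Xi : Set (Set (↥Ii → ℝ))) (Xj : Set (Set (↥Ij → ℝ))) :
    Set (Set (↥(Ii ∪ Ij) → ℝ)) :=
  { s ∈ C0 X Ii Ij Xi Xj | ¬ ∃ s' ∈ C0 X Ii Ij Xi Xj, s ⊂ s' }

/-- The union `I_0 ∪ … ∪ I_k` of the first `k+1` index sets. -/
def Un {n : ℕ} (I : ℕ → Set (Fin n)) : ℕ → Set (Fin n)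
  | 0 => I 0
  | k + 1 => Un I k ∪ I (k + 1)

/-- The iterated composition `Y_{k+1}`: `Y_1 = X_1` and `Y_{k+1} = Y_k ⋒ X_{k+1}`
(indexed from `0` here, so `Yiter X I XP k` is the paper's `Y_{k+1}`). -/
def Yiter {n : ℕ} (X : Set (Fin n → ℝ)) (I : ℕ → Set (Fin n))
    (XP : ∀ k, Set (Set (↥(I k) → ℝ))) : ∀ k, Set (Set (↥(Un I k) → ℝ))
  | 0 => XP 0
  | k + 1 => Comp X (Un I k) (I (k + 1)) (Yiter X I XP k) (XP (k + 1))

theorem subset_Un {n : ℕ} (I : ℕ → Set (Fin n)) : ∀ {i k : ℕ}, i ≤ k → I i ⊆ Un I k := by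
  intro i k
  induction k with
  | zero =>
    intro h
    have : i = 0 := Nat.le_zero.mp h
    subst this
    exact subset_of_eq rfl
  | succ k ih =>
    intro h
    rcases (by omega : i ≤ k ∨ i = k + 1) with h' | h'
    · exact (ih h').trans Set.subset_union_left
    · subst h'
      exact Set.subset_union_right

section Aux

lemma resSet_mono {d : ℕ} {I K : Set (Fin d)} (h : I ⊆ K) {S T : Set (↥K → ℝ)}
    (hST : S ⊆ T) : resSet h S ⊆ resSet h T := Set.image_mono hST

lemma resSet_resSet {d : ℕ} {I K L : Set (Fin d)} (h1 : I ⊆ K) (h2 : K ⊆ L)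
    (S : Set (↥L → ℝ)) : resSet h1 (resSet h2 S) = resSet (h1.trans h2) S := by
  simp only [resSet, ← Set.image_comp]
  rfl

lemma res_proj' {d : ℕ} {K L : Set (Fin d)} (h : K ⊆ L) (x : Fin d → ℝ) :
    res h (proj L x) = proj K x := rfl

lemma master {n : ℕ} (X : Set (Fin n → ℝ)) (hX : X.Nonempty)
    (I : ℕ → Set (Fin n)) (XP : ∀ k, Set (Set (↥(I k) → ℝ))) :
    ∀ k, (∀ j, j ≤ k → IsPartition (XP j) (projSet (I j) X)) →
    (∀ s ∈ Yiter X I XP k, s.Nonempty ∧ s ⊆ projSet (Un I k) X ∧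
      ∀ i (hi : i ≤ k), ∃ t ∈ XP i, resSet (subset_Un I hi) s ⊆ t) ∧
    (∀ s1 ∈ Yiter X I XP k, ∀ s2 ∈ Yiter X I XP k, (s1 ∩ s2).Nonempty → s1 = s2) ∧
    (∀ x ∈ X, ∃ t ∈ Yiter X I XP k, proj (Un I k) x ∈ t) := by
  intro k
  induction k with
  | zero =>
    intro hP
    obtain ⟨hne, hdisj, hcov⟩ := hP 0 le_rfl
    refine ⟨?_, ?_, ?_⟩
    · intro s hs
      refine ⟨hne s hs, ?_, ?_⟩
      · show s ⊆ projSet (I 0) X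
        rw [← hcov]; exact Set.subset_sUnion_of_mem hs
      · intro i hi
        obtain rfl : i = 0 := Nat.le_zero.mp hi
        refine ⟨s, hs, ?_⟩
        rintro f ⟨g, hg, rfl⟩
        exact hg
    · intro s1 h1 s2 h2 ⟨q, hq1, hq2⟩
      by_contra hne'
      exact Set.disjoint_left.mp (hdisj h1 h2 hne') hq1 hq2
    · intro x hx
      have hmem : proj (I 0) x ∈ projSet (I 0) X := ⟨x, hx, rfl⟩
      rw [← hcov] at hmem
      obtain ⟨t, ht, hpt⟩ := hmem
      exact ⟨t, ht, hpt⟩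
  | succ k ih =>
    intro hP
    obtain ⟨ihA, ihB, ihC⟩ := ih (fun j hj => hP j (hj.trans (Nat.le_succ k)))
    obtain ⟨hne1, hdisj1, hcov1⟩ := hP (k + 1) le_rfl
    -- `singleton_mem`: for any x ∈ X, the singleton of its projection is in C0
    have singleton_mem : ∀ x ∈ X,
        ({proj (Un I (k + 1)) x} : Set (↥(Un I (k + 1)) → ℝ)) ∈
          C0 X (Un I k) (I (k + 1)) (Yiter X I XP k) (XP (k + 1)) := by
      intro x hx
      obtain ⟨t, ht, hpt⟩ := ihC x hx
      have hmem : proj (I (k + 1)) x ∈ projSet (I (k + 1)) X := ⟨x, hx, rfl⟩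
      rw [← hcov1] at hmem
      obtain ⟨t', ht', hpt'⟩ := hmem
      refine ⟨Set.singleton_subset_iff.mpr ⟨x, hx, rfl⟩, ⟨t, ht, ?_⟩, ⟨t', ht', ?_⟩⟩
      · rintro f ⟨g, hg, rfl⟩
        replace hg : g = proj (Un I (k + 1)) x := hg; subst hg
        exact hpt
      · rintro f ⟨g, hg, rfl⟩
        replace hg : g = proj (Un I (k + 1)) x := hg; subst hg
        exact hpt'
    have partA : ∀ s ∈ Yiter X I XP (k + 1), s.Nonempty ∧ s ⊆ projSet (Un I (k + 1)) X ∧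
        ∀ i (hi : i ≤ k + 1), ∃ t ∈ XP i, resSet (subset_Un I hi) s ⊆ t := by
      intro s hs
      obtain ⟨hsC0, hmax⟩ := hs
      refine ⟨?_, hsC0.1, ?_⟩
      · rw [Set.nonempty_iff_ne_empty]
        intro rfl'
        obtain ⟨x, hx⟩ := hX
        refine hmax ⟨_, singleton_mem x hx, ?_⟩
        rw [rfl']
        exact Set.ssubset_iff_of_subset (Set.empty_subset _) |>.mpr
          ⟨_, Set.mem_singleton _, fun h => h⟩
      · intro i hi
        rcases Nat.lt_or_ge i (k + 1) with h' | h'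
        · have hik : i ≤ k := Nat.lt_succ_iff.mp h'
          obtain ⟨t, ht, hst⟩ := hsC0.2.1
          obtain ⟨si, hsi, hti⟩ := (ihA t ht).2.2 i hik
          refine ⟨si, hsi, ?_⟩
          have : resSet (subset_Un I hi) s =
              resSet (subset_Un I hik) (resSet (Set.subset_union_left) s) :=
            (resSet_resSet _ _ s).symm
          rw [this]
          exact (resSet_mono _ hst).trans hti
        · obtain rfl : i = k + 1 := le_antisymm hi h'
          obtain ⟨t', ht', hst'⟩ := hsC0.2.2
          exact ⟨t', ht', hst'⟩
    have partB : ∀ s1 ∈ Yiter X I XP (k + 1), ∀ s2 ∈ Yiter X I XP (k + 1),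
        (s1 ∩ s2).Nonempty → s1 = s2 := by
      intro s1 hs1 s2 hs2 ⟨q, hq1, hq2⟩
      obtain ⟨h1C0, h1max⟩ := hs1
      obtain ⟨h2C0, h2max⟩ := hs2
      obtain ⟨t1, ht1, hst1⟩ := h1C0.2.1
      obtain ⟨t2, ht2, hst2⟩ := h2C0.2.1
      obtain ⟨t1', ht1', hst1'⟩ := h1C0.2.2
      obtain ⟨t2', ht2', hst2'⟩ := h2C0.2.2
      have htEq : t1 = t2 :=
        ihB t1 ht1 t2 ht2 ⟨res Set.subset_union_left q,
          hst1 ⟨q, hq1, rfl⟩, hst2 ⟨q, hq2, rfl⟩⟩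
      have ht'Eq : t1' = t2' := by
        by_contra hne'
        exact Set.disjoint_left.mp (hdisj1 ht1' ht2' hne')
          (hst1' ⟨q, hq1, rfl⟩) (hst2' ⟨q, hq2, rfl⟩)
      have hUnion : s1 ∪ s2 ∈ C0 X (Un I k) (I (k + 1)) (Yiter X I XP k) (XP (k + 1)) := by
        refine ⟨Set.union_subset h1C0.1 h2C0.1, ⟨t1, ht1, ?_⟩, ⟨t1', ht1', ?_⟩⟩
        · show res _ '' (s1 ∪ s2) ⊆ _; rw [Set.image_union]
          exact Set.union_subset hst1 (htEq ▸ hst2)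
        · show res _ '' (s1 ∪ s2) ⊆ _; rw [Set.image_union]
          exact Set.union_subset hst1' (ht'Eq ▸ hst2')
      have h21 : s2 ⊆ s1 := by
        by_contra hsub
        exact h1max ⟨s1 ∪ s2, hUnion,
          (Set.ssubset_iff_of_subset Set.subset_union_left).mpr
            (by obtain ⟨y, hy2, hy1⟩ := Set.not_subset.mp hsub
                exact ⟨y, Set.mem_union_right _ hy2, hy1⟩)⟩
      have h12 : s1 ⊆ s2 := by
        by_contra hsub
        exact h2max ⟨s1 ∪ s2, hUnion,
          (Set.ssubset_iff_of_subset Set.subset_union_right).mpr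
            (by obtain ⟨y, hy1, hy2⟩ := Set.not_subset.mp hsub
                exact ⟨y, Set.mem_union_left _ hy1, hy2⟩)⟩
      exact Set.Subset.antisymm h12 h21
    refine ⟨partA, partB, ?_⟩
    · intro x hx
      set p := proj (Un I (k + 1)) x with hp
      set S0 : Set (Set (↥(Un I (k + 1)) → ℝ)) :=
        {c | c ∈ C0 X (Un I k) (I (k + 1)) (Yiter X I XP k) (XP (k + 1)) ∧ p ∈ c} with hS0
      have hpS0 : ({p} : Set (↥(Un I (k + 1)) → ℝ)) ∈ S0 :=
        ⟨singleton_mem x hx, Set.mem_singleton _⟩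
      have hZ : ∀ c ⊆ S0, IsChain (· ⊆ ·) c → c.Nonempty →
          ∃ ub ∈ S0, ∀ s ∈ c, s ⊆ ub := by
        intro c hcS0 hchain ⟨e0, he0⟩
        obtain ⟨t0, ht0, he0t0⟩ := (hcS0 he0).1.2.1
        obtain ⟨t0', ht0', he0t0'⟩ := (hcS0 he0).1.2.2
        refine ⟨⋃₀ c, ⟨⟨?_, ⟨t0, ht0, ?_⟩, ⟨t0', ht0', ?_⟩⟩, ?_⟩, fun s hsc => Set.subset_sUnion_of_mem hsc⟩
        · exact Set.sUnion_subset fun e he => (hcS0 he).1.1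
        · rintro f ⟨g, hg, rfl⟩
          obtain ⟨e, hec, hge⟩ := hg
          obtain ⟨te, hte, hete⟩ := (hcS0 hec).1.2.1
          have : te = t0 := ihB te hte t0 ht0
            ⟨res Set.subset_union_left p,
             hete ⟨p, (hcS0 hec).2, rfl⟩, he0t0 ⟨p, (hcS0 he0).2, rfl⟩⟩
          exact this ▸ hete ⟨g, hge, rfl⟩
        · rintro f ⟨g, hg, rfl⟩
          obtain ⟨e, hec, hge⟩ := hg
          obtain ⟨te', hte', hete'⟩ := (hcS0 hec).1.2.2
          have : te' = t0' := by
            by_contra hne'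
            exact Set.disjoint_left.mp (hdisj1 hte' ht0' hne')
              (hete' ⟨p, (hcS0 hec).2, rfl⟩) (he0t0' ⟨p, (hcS0 he0).2, rfl⟩)
          exact this ▸ hete' ⟨g, hge, rfl⟩
        · exact ⟨e0, he0, (hcS0 he0).2⟩
      obtain ⟨m, hpm, hmS0, hmmax⟩ := zorn_subset_nonempty S0 hZ _ hpS0
      refine ⟨m, ⟨hmS0.1, ?_⟩, hpm (Set.mem_singleton _)⟩
      rintro ⟨s', hs'C0, hss'⟩
      exact hss'.ne (le_antisymm hss'.subset (hmmax ⟨hs'C0, hss'.subset hmS0.2⟩ hss'.subset))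

end Aux

/-- if `X` is nonempty then every element `s` of the iterated composition
`Y_m` (here `Yiter X I XP (m-1)`) projects, for each subsystem `i < m`, inside exactly
one block `si ∈ X_i`; hence the decomposition maps `d_i : Y_m → X_i` are well defined. -/
theorem Yiter_unique_blocks {n m : ℕ} (hm : 1 ≤ m)
    (X : Set (Fin n → ℝ)) (hX : X.Nonempty)
    (I : ℕ → Set (Fin n)) (XP : ∀ k, Set (Set (↥(I k) → ℝ)))
    (hXP : ∀ k < m, IsPartition (XP k) (projSet (I k) X))
    (s : Set (↥(Un I (m - 1)) → ℝ)) (hs : s ∈ Yiter X I XP (m - 1)) :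
    ∀ i (hi : i < m),
      ∃! si, si ∈ XP i ∧ resSet (subset_Un I (by omega : i ≤ m - 1)) s ⊆ si := by
  intro i hi
  have hi' : i ≤ m - 1 := by omega
  obtain ⟨master1, _, _⟩ := master X hX I XP (m - 1) (fun j hj => hXP j (by omega))
  obtain ⟨hsne, _, hblocks⟩ := master1 s hs
  obtain ⟨si, hsi, hssi⟩ := hblocks i hi'
  refine ⟨si, ⟨hsi, hssi⟩, ?_⟩
  rintro si' ⟨hsi', hssi'⟩
  by_contra hne'
  obtain ⟨⟨hPne, hPdisj, hPcov⟩⟩ : Nonempty (IsPartition (XP i) (projSet (I i) X)) :=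
    ⟨hXP i hi⟩
  obtain ⟨f, hf⟩ := hsne
  exact Set.disjoint_left.mp (hPdisj hsi' hsi hne')
    (hssi' ⟨f, hf, rfl⟩) (hssi ⟨f, hf, rfl⟩)
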